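/- Let q, r be positive integers and n = qr + 1, with vertices a₀,…,a_{n−1} and indices taken modulo n. For 0 ≤ i ≤ n−1 and 0 ≤ j ≤ r−1 let S_{ij} = {a_{i+t} : jq+1 ≤ t ≤ (j+1)q}. Let X₀,…,X_{n−1} be independent random variables, each uniform on {0,1,…,r−1}, and let G be the random graph on {a₀,…,a_{n−1}} in which, for 0 ≤ i < j ≤ n−1, a_i a_j is an edge if and only if a_i ∈ S_{j X_j} and a_j ∈ S_{i X_i}. Then for every vertex a_i, the degree of a_i in G has the binomial distribution Bin(q, 1/r); in particular E[d_G(a_i)] = q/r. -/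

import Mathlib

/-- The arc `S_{ij} = {a_{i+t} : jq + 1 ≤ t ≤ (j+1)q}` of vertices, where the
vertices are `Fin (qr + 1)` (that is, `a_ℓ = ℓ`) and indices are taken modulo
`n = qr + 1`. -/
def Sij (q r : ℕ) (i : Fin (q * r + 1)) (j : ℕ) : Finset (Fin (q * r + 1)) :=
  (Finset.Icc (j * q + 1) ((j + 1) * q)).image fun t : ℕ => i + Fin.ofNat (q * r + 1) t

/-- The degree of the vertex `a_i` in the random graph `G` determined by the
outcome `X` of the random variables: the number of vertices `a_j ≠ a_i` with
`a_i ∈ S_{j X_j}` and `a_j ∈ S_{i X_i}`. -/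
def degRG (q r : ℕ) (i : Fin (q * r + 1)) (X : Fin (q * r + 1) → Fin r) : ℕ :=
  (Finset.univ.filter fun j : Fin (q * r + 1) =>
    j ≠ i ∧ i ∈ Sij q r j ((X j : ℕ)) ∧ j ∈ Sij q r i ((X i : ℕ))).card


open Finset

variable {α β : Type*} [Fintype α] [DecidableEq α] [Fintype β] [DecidableEq β]

lemma card_filter_pi (A : α → Finset β) :
    (univ.filter fun X : α → β => ∀ j, X j ∈ A j).card = ∏ j, (A j).card := by
  rw [← Fintype.card_piFinset]
  congr 1
  ext X
  simp [Fintype.mem_piFinset]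

lemma count_two (i j : α) (hij : j ≠ i) (v w : β) :
    (univ.filter fun X : α → β => X i = v ∧ X j = w).card
      = Fintype.card β ^ (Fintype.card α - 2) := by
  classical
  have h : (univ.filter fun X : α → β => X i = v ∧ X j = w)
      = univ.filter fun X : α → β =>
        ∀ k, X k ∈ (if k = i then {v} else if k = j then {w} else (univ : Finset β)) := by
    ext X
    simp only [mem_filter, mem_univ, true_and]
    constructor
    · rintro ⟨h1, h2⟩ k
      split_ifs with hk1 hk2
      · simp [hk1, h1]
      · simp [hk2, h2]
      · simp
    · intro h
      have h1 := h i; have h2 := h j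
      simp [hij] at h1 h2
      exact ⟨h1, h2⟩
  rw [h, card_filter_pi]
  have := Finset.prod_mul_prod_compl ({i, j} : Finset α)
    (fun k => (if k = i then ({v} : Finset β) else if k = j then {w} else univ).card)
  rw [← this]
  have hc1 : (∏ k ∈ ({i, j} : Finset α),
      (if k = i then ({v} : Finset β) else if k = j then {w} else univ).card) = 1 := by
    rw [Finset.prod_pair (Ne.symm hij)]
    simp [hij]
  have hc2 : (∏ k ∈ ({i, j} : Finset α)ᶜ,
      (if k = i then ({v} : Finset β) else if k = j then {w} else univ).card)
      = Fintype.card β ^ (Fintype.card α - 2) := by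
    rw [Finset.prod_congr rfl (g := fun _ => Fintype.card β), Finset.prod_const]
    · congr 1
      rw [Finset.card_compl, Finset.card_pair (Ne.symm hij)]
    · intro k hk
      simp only [Finset.mem_compl, Finset.mem_insert, Finset.mem_singleton, not_or] at hk
      simp [hk.1, hk.2, Finset.card_univ]
  rw [hc1, hc2, one_mul]

lemma count_bernoulli (S : Finset α) (i : α) (hi : i ∉ S) (v : β) (c : α → β) (s : ℕ) :
    (univ.filter fun X : α → β =>
        X i = v ∧ (S.filter fun j => X j = c j).card = s).card
      = S.card.choose s * (Fintype.card β - 1) ^ (S.card - s)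
          * Fintype.card β ^ (Fintype.card α - S.card - 1) := by
  classical
  have key : (univ.filter fun X : α → β =>
        X i = v ∧ (S.filter fun j => X j = c j).card = s)
      = (S.powersetCard s).biUnion (fun T => univ.filter fun X : α → β =>
          X i = v ∧ (S.filter fun j => X j = c j) = T) := by
    ext X
    simp only [mem_filter, mem_univ, true_and, mem_biUnion, mem_powersetCard]
    constructor
    · rintro ⟨h1, h2⟩
      exact ⟨S.filter fun j => X j = c j, ⟨filter_subset _ _, h2⟩, h1, rfl⟩
    · rintro ⟨T, ⟨_, hT⟩, h1, h2⟩
      exact ⟨h1, by rw [h2, hT]⟩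
  rw [key, card_biUnion]
  · have heach : ∀ T ∈ S.powersetCard s,
        (univ.filter fun X : α → β =>
          X i = v ∧ (S.filter fun j => X j = c j) = T).card
        = (Fintype.card β - 1) ^ (S.card - s)
            * Fintype.card β ^ (Fintype.card α - S.card - 1) := by
      intro T hT
      rw [mem_powersetCard] at hT
      obtain ⟨hTS, hTs⟩ := hT
      have hiT : i ∉ T := fun h => hi (hTS h)
      have hfilter : (univ.filter fun X : α → β =>
          X i = v ∧ (S.filter fun j => X j = c j) = T)
          = univ.filter fun X : α → β => ∀ k, X k ∈
            (if k = i then {v} else if k ∈ T then {c k}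
              else if k ∈ S then {c k}ᶜ else (univ : Finset β)) := by
        ext X
        simp only [mem_filter, mem_univ, true_and]
        constructor
        · rintro ⟨h1, h2⟩ k
          split_ifs with hk1 hk2 hk3
          · simp [hk1, h1]
          · have : k ∈ S.filter fun j => X j = c j := by rw [h2]; exact hk2
            simp only [mem_filter] at this
            simp [this.2]
          · have : k ∉ S.filter fun j => X j = c j := by rw [h2]; exact hk2
            simp only [mem_filter, hk3, true_and] at this
            simp [this]
          · simp
        · intro h
          have h1 := h i
          simp [hi, hiT] at h1
          refine ⟨h1, ?_⟩
          ext k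
          simp only [mem_filter]
          constructor
          · rintro ⟨hkS, hkc⟩
            by_contra hkT
            have := h k
            have hki : k ≠ i := fun e => hi (e ▸ hkS)
            simp [hki, hkT, hkS, hkc] at this
          · intro hkT
            have := h k
            have hki : k ≠ i := fun e => hiT (e ▸ hkT)
            simp [hki, hkT] at this
            exact ⟨hTS hkT, this⟩
      rw [hfilter, card_filter_pi]
      set f : α → ℕ := fun k =>
        (if k = i then ({v} : Finset β) else if k ∈ T then {c k}
          else if k ∈ S then {c k}ᶜ else univ).card with hf
      rw [← Finset.prod_mul_prod_compl (insert i S) f]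
      have hA : ∏ k ∈ insert i S, f k = (Fintype.card β - 1) ^ (S.card - s) := by
        rw [Finset.prod_insert hi]
        have hfi : f i = 1 := by simp [hf]
        rw [hfi, one_mul, ← Finset.prod_sdiff hTS]
        have hT1 : ∏ k ∈ T, f k = 1 := by
          apply Finset.prod_eq_one
          intro k hk
          have hki : k ≠ i := fun e => hiT (e ▸ hk)
          simp [hf, hki, hk]
        have hST : ∏ k ∈ S \ T, f k = (Fintype.card β - 1) ^ (S.card - s) := by
          rw [Finset.prod_congr rfl (g := fun _ => Fintype.card β - 1), Finset.prod_const]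
          · rw [Finset.card_sdiff_of_subset hTS, hTs]
          · intro k hk
            rw [Finset.mem_sdiff] at hk
            have hki : k ≠ i := fun e => hi (e ▸ hk.1)
            simp [hf, hki, hk.1, hk.2, Finset.card_compl]
        rw [hT1, hST, mul_one]
      have hB : ∏ k ∈ (insert i S)ᶜ, f k
          = Fintype.card β ^ (Fintype.card α - S.card - 1) := by
        rw [Finset.prod_congr rfl (g := fun _ => Fintype.card β), Finset.prod_const]
        · congr 1
          rw [Finset.card_compl, Finset.card_insert_of_notMem hi]
          omega
        · intro k hk
          simp only [Finset.mem_compl, Finset.mem_insert, not_or] at hk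
          have hkT : k ∉ T := fun h => hk.2 (hTS h)
          simp [hf, hk.1, hk.2, hkT, Finset.card_univ]
      rw [hA, hB]
    rw [Finset.sum_congr rfl heach, Finset.sum_const, Finset.card_powersetCard, smul_eq_mul,
      mul_assoc]
  · intro T1 h1 T2 h2 hne
    rw [Function.onFun, Finset.disjoint_left]
    intro X hX1 hX2
    simp only [mem_filter] at hX1 hX2
    exact hne (hX1.2.2 ▸ hX2.2.2)

lemma mem_Sij_iff {q r : ℕ} (hq : 0 < q) {m : ℕ} (hm : m < r) (k x : Fin (q * r + 1)) :
    x ∈ Sij q r k m ↔ x ≠ k ∧ ((x - k).val - 1) / q = m := by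
  constructor
  · intro hx
    obtain ⟨t, ht, hxt⟩ := Finset.mem_image.mp hx
    rw [Finset.mem_Icc] at ht
    have htn : t < q * r + 1 := by
      have h1 : (m + 1) * q ≤ r * q := Nat.mul_le_mul_right q hm
      have h2 : r * q = q * r := Nat.mul_comm r q
      omega
    have hval : ((Fin.ofNat (q * r + 1) t) : ℕ) = t := by rw [Fin.val_ofNat]; exact Nat.mod_eq_of_lt htn
    have hsub : x - k = Fin.ofNat (q * r + 1) t := by rw [← hxt]; abel
    have hd : (x - k).val = t := by rw [hsub, hval]
    have hxk : x ≠ k := by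
      intro h
      rw [h, sub_self] at hd
      simp only [Fin.val_zero] at hd
      omega
    refine ⟨hxk, ?_⟩
    rw [hd]
    exact Nat.div_eq_of_lt_le (by omega) (by omega)
  · rintro ⟨hxk, hd⟩
    set d := (x - k).val with hdd
    have hd1 : 1 ≤ d := by
      have h0 : x - k ≠ 0 := sub_ne_zero_of_ne hxk
      have : (x - k).val ≠ 0 := Fin.val_ne_zero_iff.mpr h0
      omega
    have hdn : d < q * r + 1 := (x - k).isLt
    have hmod := Nat.div_add_mod (d - 1) q
    have hmodlt : (d - 1) % q < q := Nat.mod_lt _ hq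
    rw [hd] at hmod
    have e2 : (m + 1) * q = m * q + q := by ring
    have e3 : q * m = m * q := Nat.mul_comm q m
    refine Finset.mem_image.mpr ⟨d, Finset.mem_Icc.mpr ⟨by omega, by omega⟩, ?_⟩
    have hcast : Fin.ofNat (q * r + 1) d = x - k := by
      rw [hdd]; exact Fin.ofNat_val_eq_self _
    rw [hcast]; abel

lemma D_lt {q r : ℕ} (hq : 0 < q) (hr : 0 < r) {k x : Fin (q * r + 1)} (h : x ≠ k) :
    ((x - k).val - 1) / q < r := by
  have hd1 : 1 ≤ (x - k).val := by
    have h0 : x - k ≠ 0 := sub_ne_zero_of_ne h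
    have : (x - k).val ≠ 0 := Fin.val_ne_zero_iff.mpr h0
    omega
  have hdn : (x - k).val < q * r + 1 := (x - k).isLt
  rw [Nat.div_lt_iff_lt_mul hq]
  have h2 : r * q = q * r := Nat.mul_comm r q
  have hqr : 1 ≤ q * r := Nat.mul_pos hq hr
  have hA : q * r + 1 - q - 1 = q * r - q := by omega
  have hB : q * r + 1 - 1 = q * r := by omega
  have hC : q * r + 1 = ((q * r - 1) + 1) + 1 := by omega
  omega

lemma card_Sij {q r : ℕ} (hq : 0 < q) {v : ℕ} (hv : v < r) (i : Fin (q * r + 1)) :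
    (Sij q r i v).card = q := by
  rw [Sij, Finset.card_image_of_injOn, Nat.card_Icc]
  · have : (v + 1) * q = v * q + q := by ring
    omega
  · intro t1 h1 t2 h2 he
    simp only [Finset.coe_Icc, Set.mem_Icc] at h1 h2
    have hb : (v + 1) * q ≤ r * q := Nat.mul_le_mul_right q hv
    have hc : r * q = q * r := Nat.mul_comm r q
    have ht1 : t1 < q * r + 1 := by omega
    have ht2 : t2 < q * r + 1 := by omega
    have h3 := add_left_cancel he
    have h4 := congrArg Fin.val h3
    rwa [Fin.val_ofNat, Fin.val_ofNat, Nat.mod_eq_of_lt ht1, Nat.mod_eq_of_lt ht2] at h4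

lemma not_mem_Sij_self {q r : ℕ} (hq : 0 < q) {v : ℕ} (hv : v < r) (i : Fin (q * r + 1)) :
    i ∉ Sij q r i v := by
  rw [mem_Sij_iff hq hv]
  simp

/-- In the random graph `G` on `n = qr + 1` vertices determined by independent
uniform random variables `X₀, …, X_{n-1}` with values in `{0, …, r-1}` — where
for `i < j` the pair `a_i a_j` is an edge iff `a_i ∈ S_{j X_j}` and
`a_j ∈ S_{i X_i}` — the degree of each vertex `a_i` has the binomial
distribution `Bin(q, 1/r)` (probabilities computed with respect to the uniform
measure on the sample space `Fin n → Fin r` of outcomes of the `Xᵢ`); in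
particular its expectation is `q/r`. -/
theorem stmt14 (q r : ℕ) (hq : 0 < q) (hr : 0 < r) (i : Fin (q * r + 1)) :
    (∀ s : ℕ, s ≤ q →
      ((Finset.univ.filter fun X : Fin (q * r + 1) → Fin r => degRG q r i X = s).card : ℝ)
        / (Fintype.card (Fin (q * r + 1) → Fin r) : ℝ)
      = (q.choose s : ℝ) * (1 / (r : ℝ)) ^ s * (1 - 1 / (r : ℝ)) ^ (q - s)) ∧
    (∑ X : Fin (q * r + 1) → Fin r, (degRG q r i X : ℝ))
        / (Fintype.card (Fin (q * r + 1) → Fin r) : ℝ)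
      = (q : ℝ) / (r : ℝ) := by
  have hqr : 1 ≤ q * r := Nat.mul_pos hq hr
  have hA : q * r + 1 - q - 1 = q * r - q := by omega
  have hB : q * r + 1 - 1 = q * r := by omega
  have hC : q * r + 1 = ((q * r - 1) + 1) + 1 := by omega
  have hRcard : Fintype.card (Fin (q * r + 1) → Fin r) = r ^ (q * r + 1) := by
    simp [Fintype.card_fun]
  have hR0 : (r : ℝ) ≠ 0 := Nat.cast_ne_zero.mpr hr.ne'
  -- the "target value" function c : if X j = c j then i ∈ S_{j, X j}
  obtain ⟨c, hcval⟩ : ∃ c : Fin (q * r + 1) → Fin r,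
      ∀ j : Fin (q * r + 1), j ≠ i → ((c j : ℕ) = ((i - j).val - 1) / q) :=
    ⟨fun j => if h : j = i then ⟨0, hr⟩ else ⟨((i - j).val - 1) / q, D_lt hq hr (Ne.symm h)⟩,
      fun j h => by simp [dif_neg h]⟩
  -- rewriting the degree
  have hdeg : ∀ X : Fin (q * r + 1) → Fin r,
      degRG q r i X = ((Sij q r i (X i)).filter fun j => X j = c j).card := by
    intro X
    rw [degRG]
    congr 1
    ext j
    simp only [Finset.mem_filter, Finset.mem_univ, true_and]
    constructor
    · rintro ⟨hji, h1, h2⟩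
      refine ⟨h2, ?_⟩
      rw [mem_Sij_iff hq (X j).isLt] at h1
      exact Fin.ext (by rw [hcval j hji]; exact h1.2.symm)
    · rintro ⟨h2, h1⟩
      have hji : j ≠ i := by
        rw [mem_Sij_iff hq (X i).isLt] at h2
        exact h2.1
      refine ⟨hji, ?_, h2⟩
      rw [mem_Sij_iff hq (X j).isLt]
      refine ⟨Ne.symm hji, ?_⟩
      rw [h1, hcval j hji]
  constructor
  · -- distribution
    intro s hs
    have hsplit : (Finset.univ.filter fun X : Fin (q * r + 1) → Fin r => degRG q r i X = s)
        = Finset.univ.biUnion fun v : Fin r =>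
            Finset.univ.filter fun X : Fin (q * r + 1) → Fin r =>
              X i = v ∧ ((Sij q r i v).filter fun j => X j = c j).card = s := by
      ext X
      simp only [Finset.mem_filter, Finset.mem_univ, true_and, Finset.mem_biUnion]
      constructor
      · intro h
        exact ⟨X i, rfl, by rw [← hdeg X]; exact h⟩
      · rintro ⟨v, hv, h⟩
        rw [hdeg X, hv]
        exact h
    have hdisj : ∀ v1 ∈ (Finset.univ : Finset (Fin r)), ∀ v2 ∈ Finset.univ, v1 ≠ v2 →
        Disjoint
          (Finset.univ.filter fun X : Fin (q * r + 1) → Fin r =>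
            X i = v1 ∧ ((Sij q r i v1).filter fun j => X j = c j).card = s)
          (Finset.univ.filter fun X : Fin (q * r + 1) → Fin r =>
            X i = v2 ∧ ((Sij q r i v2).filter fun j => X j = c j).card = s) := by
      intro v1 _ v2 _ hne
      rw [Finset.disjoint_left]
      intro X h1 h2
      simp only [Finset.mem_filter] at h1 h2
      exact hne (h1.2.1 ▸ h2.2.1)
    rw [hsplit, Finset.card_biUnion hdisj]
    have heach : ∀ v : Fin r,
        (Finset.univ.filter fun X : Fin (q * r + 1) → Fin r =>
          X i = v ∧ ((Sij q r i v).filter fun j => X j = c j).card = s).card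
        = q.choose s * (r - 1) ^ (q - s) * r ^ (q * r - q) := by
      intro v
      have := count_bernoulli (Sij q r i v) i (not_mem_Sij_self hq v.isLt i) v c s
      rw [card_Sij hq v.isLt] at this
      rw [this]
      simp only [Fintype.card_fin]
      rw [hA]
    simp only [heach, Finset.sum_const, Finset.card_univ, Fintype.card_fin, smul_eq_mul]
    rw [hRcard]
    -- now pure real arithmetic
    have hrq : q ≤ q * r := Nat.le_mul_of_pos_right q hr
    push_cast [Nat.cast_sub hr]
    have h1r : 1 - 1 / (r : ℝ) = ((r : ℝ) - 1) / r := by field_simp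
    rw [h1r, show q * r + 1 = ((q * r - q) + (q - s) + s) + 1 by omega,
      pow_succ, pow_add, pow_add, div_pow, div_pow, one_pow]
    field_simp
  · -- expectation
    rw [← Nat.cast_sum]
    have hswap : (∑ X : Fin (q * r + 1) → Fin r, degRG q r i X)
        = ∑ j : Fin (q * r + 1),
            (Finset.univ.filter fun X : Fin (q * r + 1) → Fin r =>
              j ≠ i ∧ i ∈ Sij q r j ((X j : ℕ)) ∧ j ∈ Sij q r i ((X i : ℕ))).card := by
      simp only [degRG, Finset.card_filter]
      rw [Finset.sum_comm]
    rw [hswap]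
    have heach : ∀ j : Fin (q * r + 1),
        (Finset.univ.filter fun X : Fin (q * r + 1) → Fin r =>
          j ≠ i ∧ i ∈ Sij q r j ((X j : ℕ)) ∧ j ∈ Sij q r i ((X i : ℕ))).card
        = if j = i then 0 else r ^ (q * r - 1) := by
      intro j
      by_cases hji : j = i
      · rw [if_pos hji]
        rw [Finset.card_eq_zero, Finset.filter_eq_empty_iff]
        intro X _
        rw [hji]
        simp
      · rw [if_neg hji]
        have hiff : ∀ X : Fin (q * r + 1) → Fin r,
            (j ≠ i ∧ i ∈ Sij q r j ((X j : ℕ)) ∧ j ∈ Sij q r i ((X i : ℕ)))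
            ↔ (X i = ⟨((j - i).val - 1) / q, D_lt hq hr hji⟩
                ∧ X j = ⟨((i - j).val - 1) / q, D_lt hq hr (Ne.symm hji)⟩) := by
          intro X
          rw [mem_Sij_iff hq (X j).isLt, mem_Sij_iff hq (X i).isLt]
          constructor
          · rintro ⟨-, ⟨-, h1⟩, ⟨-, h2⟩⟩
            exact ⟨Fin.ext h2.symm, Fin.ext h1.symm⟩
          · rintro ⟨h1, h2⟩
            exact ⟨hji, ⟨Ne.symm hji, (congrArg Fin.val h2).symm⟩,
              ⟨hji, (congrArg Fin.val h1).symm⟩⟩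
        rw [Finset.filter_congr fun X _ => hiff X]
        rw [count_two i j hji]
        simp only [Fintype.card_fin]
        congr 1
    simp only [heach]
    rw [← Finset.sum_erase_add _ _ (Finset.mem_univ i), if_pos rfl, add_zero]
    have hcon : ∀ j ∈ Finset.univ.erase i,
        (if j = i then 0 else r ^ (q * r - 1)) = r ^ (q * r - 1) := by
      intro j hj
      rw [if_neg (Finset.mem_erase.mp hj).1]
    rw [Finset.sum_congr rfl hcon, Finset.sum_const, Finset.card_erase_of_mem (Finset.mem_univ i),
      Finset.card_univ, Fintype.card_fin, smul_eq_mul, hRcard]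
    rw [hB]
    push_cast
    have hpow : (r : ℝ) ^ (q * r + 1) = (r : ℝ) ^ (q * r - 1) * r * r := by
      rw [hC, pow_succ, pow_succ]
    rw [hpow]
    field_simp
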